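/- Let a and λ be nonzero complex numbers and set c = 2a/λ². Define χ(Z) = Z₀·Z₃ - Z₁·Z₂ + √2·a·Z₂·Z₃ and χ'(Z) = (√2/c)·(Z₀·Z₁ + (c²/2)·Z₂·Z₃) for Z ∈ ℂ⁴. Let T be the 4×4 complex matrix with rows (λ, 0, 0, 0), (0, λ, 0, 0), (-λ/(a√2), 0, 1/λ, 0), (0, λ/(a√2), 0, 1/λ). Then for all Z ∈ ℂ⁴, χ(T·Z) = χ'(Z). -/

import Mathlib

theorem kerr_to_PD_quadratic (a lam : ℂ) (ha : a ≠ 0) (hlam : lam ≠ 0)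
    (c : ℂ) (hc : c = 2 * a / lam^2)
    (T : Matrix (Fin 4) (Fin 4) ℂ)
    (hT : T = !![lam, 0, 0, 0;
                 0, lam, 0, 0;
                 -(lam / (a * (Real.sqrt 2 : ℂ))), 0, 1/lam, 0;
                 0, lam / (a * (Real.sqrt 2 : ℂ)), 0, 1/lam]) :
    ∀ Z : Fin 4 → ℂ,
      (T.mulVec Z) 0 * (T.mulVec Z) 3 - (T.mulVec Z) 1 * (T.mulVec Z) 2
          + (Real.sqrt 2 : ℂ) * a * (T.mulVec Z) 2 * (T.mulVec Z) 3 =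
        ((Real.sqrt 2 : ℂ) / c) * (Z 0 * Z 1 + (c^2 / 2) * Z 2 * Z 3) := by
  intro Z
  have hs : ((Real.sqrt 2 : ℝ) : ℂ) ≠ 0 := by
    exact_mod_cast Real.sqrt_ne_zero'.mpr (by norm_num)
  have hs2 : ((Real.sqrt 2 : ℝ) : ℂ) * ((Real.sqrt 2 : ℝ) : ℂ) = 2 := by
    rw [← Complex.ofReal_mul, Real.mul_self_sqrt (by norm_num)]
    norm_num
  have hcne : c ≠ 0 := by
    rw [hc]; exact div_ne_zero (mul_ne_zero two_ne_zero ha) (pow_ne_zero 2 hlam)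
  subst hT hc
  simp [Matrix.mulVec, dotProduct, Fin.sum_univ_four]
  field_simp
  ring_nf
  have hinv : ((Real.sqrt 2:ℝ):ℂ)⁻¹ = ((Real.sqrt 2:ℝ):ℂ)/2 := by
    field_simp; linear_combination -hs2
  linear_combination (-lam^4*Z 0*Z 1) * hs2
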